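/- Let U and V be healthy binary trees of height ω₁ with all levels countable, and let (U_α)_{α<ω₁} and (V_α)_{α<ω₁} be their natural decompositions (U_α = {x ∈ U : the order type of {y : y < x} is ≤ α}, with inclusions as bonding arrows, and similarly for V), and assume both are Fraïssé sequences in 𝔗₂. If there exist an increasing map φ : ω₁ → ω₁ and 𝔗₂-arrows f_α : U_α → V_{φ(α)} such that for all α ≤ β < ω₁ the map f_β restricted to U_α coincides with f_α (composed with the inclusion V_{φ(α)} ⊆ V_{φ(β)}), then U and V are isomorphic as partially ordered sets. -/

import Mathlib

/-! Trees: partially ordered sets which are meet-semilattices with well-ordered sets of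
predecessors. Objects of the category `𝔗₂` are nonempty countable bounded binary trees;
arrows are meet-semilattice embeddings whose image is a closed initial segment. -/

/-- The height of an element of a tree: the order type of its set of predecessors. -/
noncomputable def treeHt {T : Type} [SemilatticeInf T]
    [∀ t : T, IsWellOrder {x : T // x < t} (· < ·)] (t : T) : Ordinal :=
  Ordinal.type ((· < ·) : {x : T // x < t} → {x : T // x < t} → Prop)

/-- The height of a tree: the least ordinal strictly greater than the heights of all of its
elements. -/
noncomputable def treeHeight (T : Type) [SemilatticeInf T]
    [∀ t : T, IsWellOrder {x : T // x < t} (· < ·)] : Ordinal :=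
  Ordinal.lsub fun t : T => treeHt t

/-- `s` is an immediate successor of `t`. -/
def ImmSucc {T : Type} [Preorder T] (t s : T) : Prop :=
  t < s ∧ ∀ x : T, t < x → x < s → False

/-- A tree is binary if every element has at most two immediate successors. -/
def BinaryTree' (T : Type) [Preorder T] : Prop :=
  ∀ t a b c : T, ImmSucc t a → ImmSucc t b → ImmSucc t c → a = b ∨ a = c ∨ b = c

/-- A tree is bounded if every element lies below some maximal element. -/
def BoundedTree (T : Type) [Preorder T] : Prop :=
  ∀ x : T, ∃ t : T, x ≤ t ∧ IsMax t

/-- A closed initial segment: a downward-closed subset containing the suprema of all chains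
contained in it. -/
def ClosedInitialSegment {T : Type} [Preorder T] (A : Set T) : Prop :=
  IsLowerSet A ∧ ∀ C : Set T, C ⊆ A → IsChain (· ≤ ·) C → ∀ s : T, IsLUB C s → s ∈ A

/-- A tree is healthy if every non-maximal element has at least two immediate successors,
and above every element there are elements of arbitrarily large height below the height of
the tree. -/
def HealthyTree (T : Type) [SemilatticeInf T]
    [∀ t : T, IsWellOrder {x : T // x < t} (· < ·)] : Prop :=
  (∀ t : T, ¬IsMax t → ∃ a b : T, a ≠ b ∧ ImmSucc t a ∧ ImmSucc t b) ∧
  (∀ t : T, ∀ β : Ordinal, β < treeHeight T → ∃ s : T, t ≤ s ∧ β ≤ treeHt s)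

/-- A meet-semilattice embedding: an order-embedding preserving binary infima. -/
def InfEmbedding {T V : Type} [SemilatticeInf T] [SemilatticeInf V] (f : T → V) : Prop :=
  (∀ a b : T, f a ≤ f b ↔ a ≤ b) ∧ ∀ a b : T, f (a ⊓ b) = f a ⊓ f b

/-- An arrow of the category `𝔗₂`: a meet-semilattice embedding whose image is a closed
initial segment of the codomain. -/
def IsT2Arrow {T V : Type} [SemilatticeInf T] [SemilatticeInf V] (f : T → V) : Prop :=
  InfEmbedding f ∧ ClosedInitialSegment (Set.range f)

lemma treeHt_mono {T : Type} [SemilatticeInf T]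
    [∀ t : T, IsWellOrder {x : T // x < t} (· < ·)] {a b : T} (h : a ≤ b) :
    treeHt a ≤ treeHt b :=
  RelEmbedding.ordinal_type_le
    ⟨⟨fun x => ⟨x.1, lt_of_lt_of_le x.2 h⟩,
      fun x y hxy => by
        apply Subtype.ext
        simpa [Subtype.ext_iff] using hxy⟩, Iff.rfl⟩

/-- `U_α`: the set of elements of the tree `U` whose set of predecessors has order type
`≤ α`.  These are the entries of the natural decomposition of `U`. -/
def levelSeg (U : Type) [SemilatticeInf U]
    [∀ t : U, IsWellOrder {x : U // x < t} (· < ·)] (α : Ordinal) : Set U :=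
  {x : U | treeHt x ≤ α}

instance levelSeg.instSemilatticeInf (U : Type) [SemilatticeInf U]
    [∀ t : U, IsWellOrder {x : U // x < t} (· < ·)] (α : Ordinal) :
    SemilatticeInf (levelSeg U α) :=
  { (inferInstance : PartialOrder (levelSeg U α)) with
    inf := fun a b => ⟨a.1 ⊓ b.1, le_trans (treeHt_mono inf_le_left) a.2⟩
    inf_le_left := fun a b => show a.1 ⊓ b.1 ≤ a.1 from inf_le_left
    inf_le_right := fun a b => show a.1 ⊓ b.1 ≤ b.1 from inf_le_right
    le_inf := fun a b c h1 h2 => show a.1 ≤ b.1 ⊓ c.1 from le_inf h1 h2 }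

/-- The natural decomposition `(U_α)_{α<ω₁}` of `U` is a Fraïssé sequence in `𝔗₂`:
condition (U) and condition (A). -/
def NatDecompIsFraisse (U : Type) [SemilatticeInf U]
    [∀ t : U, IsWellOrder {x : U // x < t} (· < ·)] : Prop :=
  (∀ (T : Type) (_ : SemilatticeInf T) (_ : ∀ t : T, IsWellOrder {x : T // x < t} (· < ·))
      (_ : Nonempty T) (_ : Countable T), BinaryTree' T → BoundedTree T →
    ∃ α : Ordinal, α < (Cardinal.aleph 1).ord ∧
      ∃ g : T → U, InfEmbedding g ∧ Set.range g ⊆ levelSeg U α ∧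
        ClosedInitialSegment (Set.range g)) ∧
  (∀ α : Ordinal, α < (Cardinal.aleph 1).ord →
    ∀ (Y : Type) (_ : SemilatticeInf Y) (_ : ∀ t : Y, IsWellOrder {x : Y // x < t} (· < ·))
      (_ : Nonempty Y) (_ : Countable Y), BinaryTree' Y → BoundedTree Y →
    ∀ f : levelSeg U α → Y, IsT2Arrow f →
      ∃ β : Ordinal, α ≤ β ∧ β < (Cardinal.aleph 1).ord ∧
        ∃ g : Y → U, InfEmbedding g ∧ Set.range g ⊆ levelSeg U β ∧
          ClosedInitialSegment (Set.range g) ∧ ∀ x : levelSeg U α, g (f x) = x.1)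

section TreeAux

variable {T : Type} [SemilatticeInf T] [∀ t : T, IsWellOrder {x : T // x < t} (· < ·)]

lemma tree_lt_wf : WellFounded ((· < ·) : T → T → Prop) := by
  constructor
  intro v
  have H : ∀ z : {x : T // x < v}, Acc ((· < ·) : T → T → Prop) z.1 := by
    intro z
    refine (IsWellFounded.wf (α := {x : T // x < v})
      (r := ((· < ·) : {x : T // x < v} → {x : T // x < v} → Prop))).induction
      (C := fun z => Acc ((· < ·) : T → T → Prop) z.1) z ?_
    intro w IH
    constructor
    intro y hy
    exact IH ⟨y, lt_trans hy w.2⟩ (Subtype.coe_lt_coe.1 hy)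
  constructor
  intro y hy
  exact H ⟨y, hy⟩

lemma tree_pred_linear {t a b : T} (ha : a < t) (hb : b < t) : a ≤ b ∨ b ≤ a := by
  rcases @trichotomous _ ((· < ·) : {x : T // x < t} → {x : T // x < t} → Prop) _
      ⟨a, ha⟩ ⟨b, hb⟩ with h | h | h
  · exact Or.inl (le_of_lt (Subtype.mk_lt_mk.1 h))
  · exact Or.inl (le_of_eq (congrArg Subtype.val h))
  · exact Or.inr (le_of_lt (Subtype.mk_lt_mk.1 h))

lemma treeHt_lt_of_lt {a b : T} (h : a < b) : treeHt a < treeHt b := by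
  have f : PrincipalSeg ((· < ·) : {x : T // x < a} → {x : T // x < a} → Prop)
      ((· < ·) : {x : T // x < b} → {x : T // x < b} → Prop) :=
    ⟨⟨⟨fun z => ⟨z.1, lt_trans z.2 h⟩,
        fun z w hzw => by
          have h2 := congrArg Subtype.val hzw
          exact Subtype.ext h2⟩,
      fun {z w} => Subtype.mk_lt_mk.trans Subtype.coe_lt_coe⟩,
      ⟨a, h⟩, by
        intro y
        constructor
        · rintro ⟨z, rfl⟩
          exact Subtype.mk_lt_mk.2 z.2
        · intro hy
          exact ⟨⟨y.1, Subtype.mk_lt_mk.1 hy⟩, Subtype.ext rfl⟩⟩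
  exact f.ordinal_type_lt

lemma tree_exists_root (hne : Nonempty T) : ∃ r : T, ∀ y : T, ¬y < r := by
  obtain ⟨u⟩ := hne
  obtain ⟨r, -, hr⟩ := (tree_lt_wf (T := T)).has_min Set.univ ⟨u, trivial⟩
  exact ⟨r, fun y hy => hr y trivial hy⟩

lemma tree_treeHt_eq_zero {r : T} (h : ∀ y : T, ¬y < r) : treeHt r = 0 :=
  Ordinal.type_eq_zero_iff_isEmpty.2 ⟨fun z => h z.1 z.2⟩

lemma tree_isLUB_pred {v : T} (hno : ∀ w : T, w < v → ∃ y : T, y < v ∧ ¬y ≤ w) :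
    IsLUB {y : T | y < v} v := by
  constructor
  · intro y hy
    exact le_of_lt hy
  · intro z hz
    rcases lt_or_eq_of_le (inf_le_left : v ⊓ z ≤ v) with hlt | heq
    · obtain ⟨y, hyv, hy⟩ := hno _ hlt
      exact absurd (le_inf (le_of_lt hyv) (hz hyv)) hy
    · exact heq.ge.trans inf_le_right

end TreeAux

/-- Key surjectivity lemma: any `𝔗₂`-arrow defined on `levelSeg U α`, mapping into a
binary tree `V`, has range containing every element of `V` of height at most `α`. -/
lemma arrow_levelSeg_subset_range {U V : Type}
    [SemilatticeInf U] [∀ t : U, IsWellOrder {x : U // x < t} (· < ·)]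
    [SemilatticeInf V] [∀ t : V, IsWellOrder {x : V // x < t} (· < ·)]
    (hU2 : ∀ t : U, ¬IsMax t → ∃ a b : U, a ≠ b ∧ ImmSucc t a ∧ ImmSucc t b)
    (hUnomax : ∀ t : U, ¬IsMax t) (hUne : Nonempty U) (hVbin : BinaryTree' V)
    {α : Ordinal} (g : levelSeg U α → V) (hg : InfEmbedding g)
    (hcl : ClosedInitialSegment (Set.range g)) :
    ∀ v : V, treeHt v ≤ α → v ∈ Set.range g := by
  have glei : ∀ p q : levelSeg U α, g p ≤ g q ↔ p ≤ q := hg.1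
  have ginj : Function.Injective g := fun p q h =>
    le_antisymm ((glei p q).1 h.le) ((glei q p).1 h.ge)
  have glt : ∀ p q : levelSeg U α, g p < g q ↔ p < q := by
    intro p q
    rw [lt_iff_le_not_ge, lt_iff_le_not_ge, glei, glei]
  have hlow : IsLowerSet (Set.range g) := hcl.1
  intro v0
  refine (tree_lt_wf (T := V)).induction
    (C := fun w => treeHt w ≤ α → w ∈ Set.range g) v0 ?_
  intro v IH hv
  by_cases h0 : ∃ y : V, y < v
  · by_cases hmax : ∃ w : V, w < v ∧ ∀ y : V, y < v → y ≤ w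
    · -- successor case
      obtain ⟨w, hwv, hwmax⟩ := hmax
      have hisw : ImmSucc w v := ⟨hwv, fun y h1 h2 => not_le_of_gt h1 (hwmax y h2)⟩
      obtain ⟨x, hx⟩ := IH w hwv (le_trans (treeHt_lt_of_lt hwv).le hv)
      obtain ⟨a, b, hab, ha, hb⟩ := hU2 x.1 (hUnomax x.1)
      have keyHt : ∀ c : U, ImmSucc x.1 c → treeHt c = treeHt v := by
        intro c hc
        have hyle : ∀ {y : U}, y < c → y ≤ x.1 := by
          intro y hy
          rcases tree_pred_linear hy hc.1 with h | h
          · exact h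
          · rcases lt_or_eq_of_le h with h' | h'
            · exact (hc.2 y h' hy).elim
            · exact h'.ge
        have memy : ∀ {y : U}, y < c → y ∈ levelSeg U α := fun {y} hy =>
          le_trans (treeHt_mono (hyle hy)) x.2
        have hltv : ∀ y : {y : U // y < c}, g ⟨y.1, memy y.2⟩ < v := by
          intro y
          refine lt_of_le_of_lt ?_ hwv
          rw [← hx]
          exact (glei ⟨y.1, memy y.2⟩ x).2 (Subtype.coe_le_coe.1 (hyle y.2))
        have key : Nonempty (((· < ·) : {y : U // y < c} → {y : U // y < c} → Prop) ≃r
            ((· < ·) : {z : V // z < v} → {z : V // z < v} → Prop)) := by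
          refine ⟨⟨Equiv.ofBijective
            (fun y : {y : U // y < c} => (⟨g ⟨y.1, memy y.2⟩, hltv y⟩ : {z : V // z < v}))
            ⟨?_, ?_⟩, ?_⟩⟩
          · intro y1 y2 h12
            have h2 := congrArg Subtype.val h12
            have h3 := ginj h2
            have h4 := congrArg Subtype.val h3
            exact Subtype.ext h4
          · rintro ⟨z, hz⟩
            have hzw : z ≤ w := by
              rcases tree_pred_linear hz hisw.1 with h | h
              · exact h
              · rcases lt_or_eq_of_le h with h' | h'
                · exact (hisw.2 z h' hz).elim
                · exact h'.ge
            obtain ⟨p, hp⟩ := hlow (hzw.trans hx.ge) (Set.mem_range_self x)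
            have hple : p ≤ x := (glei p x).1 (by rw [hp, hx]; exact hzw)
            refine ⟨⟨p.1, lt_of_le_of_lt (Subtype.coe_le_coe.2 hple) hc.1⟩, ?_⟩
            apply Subtype.ext
            exact (congrArg g (Subtype.ext rfl)).trans hp
          · intro y1 y2
            constructor
            · intro h12
              have h13 : g ⟨y1.1, memy y1.2⟩ < g ⟨y2.1, memy y2.2⟩ := h12
              exact Subtype.coe_lt_coe.1 (Subtype.mk_lt_mk.1 ((glt _ _).1 h13))
            · intro h12
              have h13 : (⟨y1.1, memy y1.2⟩ : levelSeg U α) < ⟨y2.1, memy y2.2⟩ :=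
                Subtype.mk_lt_mk.2 (Subtype.coe_lt_coe.2 h12)
              exact (glt _ _).2 h13
        exact Ordinal.type_eq.2 key
      have haα : a ∈ levelSeg U α := le_trans (keyHt a ha).le hv
      have hbα : b ∈ levelSeg U α := le_trans (keyHt b hb).le hv
      have himm : ∀ (c : U) (hc : ImmSucc x.1 c) (hcα : c ∈ levelSeg U α),
          ImmSucc w (g ⟨c, hcα⟩) := by
        intro c hc hcα
        constructor
        · rw [← hx]
          exact (glt x ⟨c, hcα⟩).2 (Subtype.coe_lt_coe.1 hc.1)
        · intro y h1 h2
          obtain ⟨p, hp⟩ := hlow (le_of_lt h2) (Set.mem_range_self (f := g) ⟨c, hcα⟩)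
          rw [← hp] at h1 h2
          rw [← hx] at h1
          exact hc.2 p.1 (Subtype.coe_lt_coe.2 ((glt x p).1 h1))
            (Subtype.coe_lt_coe.2 ((glt p ⟨c, hcα⟩).1 h2))
      rcases hVbin w v (g ⟨a, haα⟩) (g ⟨b, hbα⟩) hisw (himm a ha haα) (himm b hb hbα)
        with h | h | h
      · exact ⟨⟨a, haα⟩, h.symm⟩
      · exact ⟨⟨b, hbα⟩, h.symm⟩
      · exact absurd (congrArg Subtype.val (ginj h)) hab
    · -- limit case
      push_neg at hmax
      refine hcl.2 {y : V | y < v} ?_ ?_ v (tree_isLUB_pred hmax)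
      · intro y hy
        exact IH y hy (le_trans (treeHt_lt_of_lt hy).le hv)
      · intro y hy z hz _
        exact tree_pred_linear hy hz
  · -- root case
    push_neg at h0
    obtain ⟨r, hr⟩ := tree_exists_root (T := U) hUne
    have hrα : r ∈ levelSeg U α := by
      show treeHt r ≤ α
      rw [tree_treeHt_eq_zero hr]
      exact zero_le
    have hvle : v ≤ g ⟨r, hrα⟩ := by
      rcases lt_or_eq_of_le (inf_le_left : v ⊓ g ⟨r, hrα⟩ ≤ v) with h | h
      · exact absurd h (h0 _)
      · exact h.ge.trans inf_le_right
    exact hlow hvle (Set.mem_range_self _)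

/-- if the natural decompositions of two healthy binary trees `U`, `V` of
height `ω₁` with countable levels are Fraïssé sequences in `𝔗₂` and there is a morphism of
sequences from the one to the other (an increasing map `φ` together with compatible
`𝔗₂`-arrows `f_α : U_α → V_{φ(α)}`), then `U` and `V` are isomorphic as partially ordered
sets. -/
theorem trees_isomorphic_of_seq_morphism
    (U : Type) [SemilatticeInf U] [∀ t : U, IsWellOrder {x : U // x < t} (· < ·)]
    (V : Type) [SemilatticeInf V] [∀ t : V, IsWellOrder {x : V // x < t} (· < ·)]
    (hUbin : BinaryTree' U) (hUhealthy : HealthyTree U)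
    (hUheight : treeHeight U = (Cardinal.aleph 1).ord)
    (hUlevels : ∀ β : Ordinal, Set.Countable {x : U | treeHt x = β})
    (hVbin : BinaryTree' V) (hVhealthy : HealthyTree V)
    (hVheight : treeHeight V = (Cardinal.aleph 1).ord)
    (hVlevels : ∀ β : Ordinal, Set.Countable {x : V | treeHt x = β})
    (hUF : NatDecompIsFraisse U) (hVF : NatDecompIsFraisse V)
    (φ : Ordinal → Ordinal) (hφmono : Monotone φ)
    (hφ : ∀ α : Ordinal, α < (Cardinal.aleph 1).ord → φ α < (Cardinal.aleph 1).ord)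
    (f : ∀ α : Ordinal, α < (Cardinal.aleph 1).ord → (levelSeg U α → V))
    (hf : ∀ (α : Ordinal) (hα : α < (Cardinal.aleph 1).ord),
      InfEmbedding (f α hα) ∧ Set.range (f α hα) ⊆ levelSeg V (φ α) ∧
        ClosedInitialSegment (Set.range (f α hα)))
    (hcoh : ∀ (α β : Ordinal) (hα : α < (Cardinal.aleph 1).ord)
      (hβ : β < (Cardinal.aleph 1).ord) (hαβ : α ≤ β) (x : levelSeg U α),
      f β hβ ⟨x.1, show x.1 ∈ levelSeg U β from
        le_trans (show treeHt x.1 ≤ α from x.2) hαβ⟩ = f α hα x) :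
    Nonempty (U ≃o V) := by
  have hlim : Order.IsSuccLimit ((Cardinal.aleph 1).ord) :=
    Cardinal.isSuccLimit_ord (Cardinal.aleph0_le_aleph 1)
  have htltU : ∀ x : U, treeHt x < (Cardinal.aleph 1).ord := fun x => by
    rw [← hUheight]
    exact Ordinal.lt_lsub _ x
  have htltV : ∀ v : V, treeHt v < (Cardinal.aleph 1).ord := fun v => by
    rw [← hVheight]
    exact Ordinal.lt_lsub _ v
  have hUnomax : ∀ t : U, ¬IsMax t := by
    intro t ht
    obtain ⟨s, hts, hs⟩ := hUhealthy.2 t (treeHt t + 1) (by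
      rw [hUheight, Ordinal.add_one_eq_succ]
      exact hlim.succ_lt (htltU t))
    have hst : s = t := le_antisymm (ht hts) hts
    rw [hst, Ordinal.add_one_eq_succ] at hs
    exact (Order.lt_succ (treeHt t)).not_ge hs
  have hUne : Nonempty U := by
    by_contra h
    rw [not_nonempty_iff] at h
    have h0 : treeHeight U ≤ 0 := Ordinal.lsub_le fun i => (h.false i).elim
    rw [hUheight] at h0
    exact absurd h0 (not_le.2 hlim.bot_lt)
  have hFle : ∀ x y : U,
      f (treeHt x) (htltU x) ⟨x, le_refl (treeHt _)⟩ ≤ f (treeHt y) (htltU y) ⟨y, le_refl (treeHt _)⟩ ↔ x ≤ y := by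
    intro x y
    have hγ : max (treeHt x) (treeHt y) < (Cardinal.aleph 1).ord :=
      max_lt (htltU x) (htltU y)
    have cx := hcoh (treeHt x) (max (treeHt x) (treeHt y)) (htltU x) hγ
      (le_max_left _ _) ⟨x, le_refl (treeHt _)⟩
    have cy := hcoh (treeHt y) (max (treeHt x) (treeHt y)) (htltU y) hγ
      (le_max_right _ _) ⟨y, le_refl (treeHt _)⟩
    rw [← cx, ← cy, (hf _ hγ).1.1]
    exact Subtype.mk_le_mk
  have hFinj : Function.Injective (fun x : U => f (treeHt x) (htltU x) ⟨x, le_refl (treeHt _)⟩) := by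
    intro x y hxy
    exact le_antisymm ((hFle x y).1 (le_of_eq hxy)) ((hFle y x).1 (le_of_eq hxy.symm))
  have hFsurj : Function.Surjective (fun x : U => f (treeHt x) (htltU x) ⟨x, le_refl (treeHt _)⟩) := by
    intro v
    obtain ⟨x, hx⟩ := arrow_levelSeg_subset_range hUhealthy.1 hUnomax hUne hVbin
      (f (treeHt v) (htltV v)) (hf _ (htltV v)).1 (hf _ (htltV v)).2.2 v le_rfl
    refine ⟨x.1, ?_⟩
    have hc := hcoh (treeHt x.1) (treeHt v) (htltU x.1) (htltV v) x.2 ⟨x.1, le_refl (treeHt _)⟩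
    show f (treeHt x.1) (htltU x.1) ⟨x.1, le_refl (treeHt _)⟩ = v
    exact hc.symm.trans ((congrArg (f (treeHt v) (htltV v)) (Subtype.ext rfl)).trans hx)
  exact ⟨⟨Equiv.ofBijective _ ⟨hFinj, hFsurj⟩, fun {a b} => hFle a b⟩⟩
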